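/- For n_k ≤ (k+3)/2 * 2^(2^(k-1)-1) (the size of the replicated construction) and independence number α_k ≤ 2^(2^(k-1)-1), we have α_k = O(n_k / log log n_k); formally: there is a constant C such that for all k ≥ 2, 2^(2^(k-1)-1) ≤ C * n_k / Nat.log 2 (Nat.log 2 n_k) where n_k = (k+3) * 2^(2^(k-1)-2) (take k ≥ 3 so quantities are integers). -/

import Mathlib

theorem alpha_loglog_bound :
    ∃ C : ℝ, 0 < C ∧ ∀ k : ℕ, 2 ≤ k →
      (2 ^ (2 ^ (k - 1) - 1) : ℝ) ≤
        C * ((k + 3) * 2 ^ (2 ^ (k - 1) - 2) : ℕ) /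
          (Nat.log 2 (Nat.log 2 ((k + 3) * 2 ^ (2 ^ (k - 1) - 2))) : ℝ) := by
  refine ⟨2, by norm_num, fun k hk => ?_⟩
  have h2 : 2 ≤ 2 ^ (k - 1) := by
    calc 2 = 2 ^ 1 := rfl
    _ ≤ 2 ^ (k - 1) := Nat.pow_le_pow_right (by norm_num) (by omega)
  set m := 2 ^ (k - 1) - 2 with hm
  have hm1 : 2 ^ (k - 1) - 1 = m + 1 := by omega
  set n := (k + 3) * 2 ^ m with hn
  have hn4 : 4 ≤ n := by
    have h1 : 1 ≤ 2 ^ m := Nat.one_le_two_pow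
    calc 4 ≤ (k + 3) * 1 := by omega
    _ ≤ n := Nat.mul_le_mul_left _ h1
  have hlogn_lb : 2 ≤ Nat.log 2 n :=
    Nat.le_log_of_pow_le (by norm_num) (by simpa using hn4)
  have hL1 : 1 ≤ Nat.log 2 (Nat.log 2 n) :=
    Nat.le_log_of_pow_le (by norm_num) (by simpa using hlogn_lb)
  have hkle : k ≤ 2 ^ (k - 1) := by
    have := Nat.lt_two_pow_self (n := k - 1)
    omega
  have hk3 : k + 3 ≤ 2 ^ (k + 1) := by
    have h4 : 2 ^ (k + 1) = 4 * 2 ^ (k - 1) := by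
      have : k + 1 = 2 + (k - 1) := by omega
      rw [this, pow_add]; norm_num
    omega
  have hnub : n ≤ 2 ^ (2 ^ (k - 1) + k - 1) := by
    calc n ≤ 2 ^ (k + 1) * 2 ^ m := Nat.mul_le_mul_right _ hk3
    _ = 2 ^ (k + 1 + m) := (pow_add 2 (k + 1) m).symm
    _ = 2 ^ (2 ^ (k - 1) + k - 1) := by congr 1; omega
  have hlogn_ub : Nat.log 2 n ≤ 2 ^ k := by
    have hsum : 2 ^ (k - 1) + 2 ^ (k - 1) = 2 ^ k := by
      rw [← two_mul, ← pow_succ']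
      congr 1; omega
    calc Nat.log 2 n ≤ Nat.log 2 (2 ^ (2 ^ (k - 1) + k - 1)) := Nat.log_mono_right hnub
    _ = 2 ^ (k - 1) + k - 1 := Nat.log_pow (by norm_num) _
    _ ≤ 2 ^ k := by omega
  have hL2 : Nat.log 2 (Nat.log 2 n) ≤ k + 3 := by
    calc Nat.log 2 (Nat.log 2 n) ≤ Nat.log 2 (2 ^ k) := Nat.log_mono_right hlogn_ub
    _ = k := Nat.log_pow (by norm_num) _
    _ ≤ k + 3 := by omega
  set L := Nat.log 2 (Nat.log 2 n) with hL
  have hLpos : (0 : ℝ) < L := by exact_mod_cast hL1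
  rw [hm1, le_div_iff₀ hLpos]
  have hncast : (n : ℝ) = ((k : ℝ) + 3) * 2 ^ m := by
    rw [hn]; push_cast; ring
  calc (2 : ℝ) ^ (m + 1) * L ≤ 2 ^ (m + 1) * ((k : ℝ) + 3) := by
        apply mul_le_mul_of_nonneg_left _ (by positivity)
        exact_mod_cast hL2
  _ = 2 * (((k : ℝ) + 3) * 2 ^ m) := by rw [pow_succ]; ring
  _ = 2 * (n : ℝ) := by rw [hncast]
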